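/- For n ≥ 3, there exists a tournament on n vertices whose monitoring arc-geodetic number equals n − 1; hence mag^-(K_n) = n − 1. Explicitly, the tournament with arcs v_i → v_j for all 1 ≤ i < j ≤ n−1, arcs v_n → v_i for 1 ≤ i ≤ n−2, and the arc v_{n-1} → v_n, has {v_1,...,v_{n-1}} as a monitoring arc-geodetic set. -/
import Mathlib


namespace MAG

variable {V : Type*}

/-- Directed walk from `x` to `y` whose list of visited vertices is `l`. -/
inductive DWalk (A : V → V → Prop) : V → V → List V → Prop
  | nil (v : V) : DWalk A v v [v]
  | cons {u v w : V} {l : List V} (h : A u v) (p : DWalk A v w l) :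
      DWalk A u w (u :: l)

/-- The arc `(a, b)` lies on the walk with vertex list `l`. -/
def ArcOn (a b : V) (l : List V) : Prop :=
  ∃ l₁ l₂ : List V, l = l₁ ++ a :: b :: l₂

/-- `l` is (the vertex list of) a shortest directed walk from `x` to `y`. -/
def IsShortest (A : V → V → Prop) (x y : V) (l : List V) : Prop :=
  DWalk A x y l ∧ ∀ l' : List V, DWalk A x y l' → l.length ≤ l'.length

/-- `x` and `y` monitor the arc `(a, b)`: the arc lies on every shortest
directed path from `x` to `y` (and such a path exists), or symmetrically
from `y` to `x`. -/
def Monitors (A : V → V → Prop) (x y a b : V) : Prop :=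
  ((∃ l, IsShortest A x y l) ∧ ∀ l, IsShortest A x y l → ArcOn a b l) ∨
  ((∃ l, IsShortest A y x l) ∧ ∀ l, IsShortest A y x l → ArcOn a b l)

/-- A monitoring arc-geodetic set of the digraph `A`. -/
def IsMAGSet (A : V → V → Prop) (M : Set V) : Prop :=
  ∀ a b : V, A a b → ∃ x ∈ M, ∃ y ∈ M, x ≠ y ∧ Monitors A x y a b

/-- The monitoring arc-geodetic number of the digraph `A`. -/
noncomputable def mag (A : V → V → Prop) [Fintype V] : ℕ :=
  sInf {n | ∃ M : Finset V, IsMAGSet A (M : Set V) ∧ M.card = n}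

/-- `A` is an orientation of the undirected simple graph `G`. -/
structure IsOrientation (G : SimpleGraph V) (A : V → V → Prop) : Prop where
  adj_iff : ∀ u v : V, G.Adj u v ↔ (A u v ∨ A v u)
  asymm : ∀ u v : V, A u v → ¬ A v u

/-- The lower monitoring arc-geodetic number of `G`. -/
noncomputable def magMinus (G : SimpleGraph V) [Fintype V] : ℕ :=
  sInf {n | ∃ A : V → V → Prop, IsOrientation G A ∧ mag A = n}

/-- The upper monitoring arc-geodetic number of `G`. -/
noncomputable def magPlus (G : SimpleGraph V) [Fintype V] : ℕ :=
  sSup {n | ∃ A : V → V → Prop, IsOrientation G A ∧ mag A = n}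

/-- A source: a vertex with no in-neighbours. -/
def IsSource (A : V → V → Prop) (v : V) : Prop := ∀ w, ¬ A w v

/-- A sink: a vertex with no out-neighbours. -/
def IsSink (A : V → V → Prop) (v : V) : Prop := ∀ w, ¬ A v w

/-- An oriented graph: no loops and no pair of opposite arcs. -/
def IsOrientedGraph (A : V → V → Prop) : Prop :=
  (∀ v, ¬ A v v) ∧ ∀ u v : V, A u v → ¬ A v u

/-- The underlying undirected graph of `A` is connected. -/
def IsConnectedDigraph (A : V → V → Prop) : Prop :=
  ∀ x y : V, Relation.ReflTransGen (fun a b => A a b ∨ A b a) x y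


namespace DWalk

variable {A : V → V → Prop} {x y m : V} {l : List V}

theorem one_le_length (h : DWalk A x y l) : 1 ≤ l.length := by
  cases h <;> simp

theorem single (h : A x y) : DWalk A x y [x, y] := .cons h (.nil y)

theorem double (h₁ : A x m) (h₂ : A m y) : DWalk A x y [x, m, y] :=
  .cons h₁ (.cons h₂ (.nil y))

theorem triple {a b : V} (h₁ : A x a) (h₂ : A a b) (h₃ : A b y) :
    DWalk A x y [x, a, b, y] := .cons h₁ (.cons h₂ (.cons h₃ (.nil y)))

theorem two_le_length (h : DWalk A x y l) (hxy : x ≠ y) : 2 ≤ l.length := by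
  cases h with
  | nil v => exact absurd rfl hxy
  | cons h p => have := p.one_le_length; simp only [List.length_cons]; omega

theorem eq_pair (h : DWalk A x y l) (hl : l.length = 2) : l = [x, y] ∧ A x y := by
  cases h with
  | nil v => simp at hl
  | cons h p =>
    cases p with
    | nil v => exact ⟨rfl, h⟩
    | cons h' p' =>
      have := p'.one_le_length
      simp only [List.length_cons] at hl
      omega

theorem eq_triple (h : DWalk A x y l) (hl : l.length = 3) :
    ∃ m, l = [x, m, y] ∧ A x m ∧ A m y := by
  cases h with
  | nil v => simp at hl
  | cons h p =>
    rename_i v l'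
    cases p with
    | nil v => simp at hl
    | cons h' p' =>
      cases p' with
      | nil _ => exact ⟨v, rfl, h, h'⟩
      | cons h'' p'' =>
        have := p''.one_le_length
        simp only [List.length_cons] at hl
        omega

end DWalk

theorem arcOn_cons₀ {a b : V} (t : List V) : ArcOn a b (a :: b :: t) := ⟨[], t, rfl⟩

theorem arcOn_cons₁ {a b x : V} (t : List V) : ArcOn a b (x :: a :: b :: t) := ⟨[x], t, rfl⟩

theorem ArcOn.of_single {a b x : V} (h : ArcOn a b [x]) : False := by
  obtain ⟨l₁, l₂, h⟩ := h
  have := congrArg List.length h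
  simp at this
  omega

theorem ArcOn.of_pair {a b x y : V} (h : ArcOn a b [x, y]) : a = x ∧ b = y := by
  obtain ⟨l₁, l₂, h⟩ := h
  match l₁, h with
  | [], h => simp_all
  | [c], h => simp at h
  | c :: d :: l, h =>
    have := congrArg List.length h
    simp only [List.length_append, List.length_cons, List.length_nil] at this
    omega

theorem ArcOn.of_triple {a b x y z : V} (h : ArcOn a b [x, y, z]) :
    (a = x ∧ b = y) ∨ (a = y ∧ b = z) := by
  obtain ⟨l₁, l₂, h⟩ := h
  match l₁, h with
  | [], h => simp_all
  | [c], h => simp at h; tauto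
  | [c, d], h => simp at h
  | c :: d :: e :: l, h =>
    have := congrArg List.length h
    simp only [List.length_append, List.length_cons, List.length_nil] at this
    omega

theorem ArcOn.of_quad {a b x y z w : V} (h : ArcOn a b [x, y, z, w]) :
    (a = x ∧ b = y) ∨ (a = y ∧ b = z) ∨ (a = z ∧ b = w) := by
  obtain ⟨l₁, l₂, h⟩ := h
  match l₁, h with
  | [], h => simp_all
  | [c], h => simp at h; tauto
  | [c, d], h => simp at h; tauto
  | [c, d, e], h => simp at h
  | c :: d :: e :: f :: l, h =>
    have := congrArg List.length h
    simp only [List.length_append, List.length_cons, List.length_nil] at this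
    omega



/-! ### Walk surgery toolkit for the general lower bound -/

section Surgery

variable {A : V → V → Prop}

theorem DWalk.head_eq {x y a : V} {l : List V} (h : DWalk A x y (a :: l)) : a = x := by
  cases h <;> rfl

theorem DWalk.tail_walk {x y a : V} {r : List V} (h : DWalk A x y (a :: r)) (hr : r ≠ []) :
    ∃ v', A x v' ∧ DWalk A v' y r := by
  cases h with
  | nil v => exact absurd rfl hr
  | cons h p => exact ⟨_, h, p⟩

theorem DWalk.suffix {y a : V} (l₁ : List V) {l₂ : List V} :
    ∀ {x : V}, DWalk A x y (l₁ ++ a :: l₂) → DWalk A a y (a :: l₂) := by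
  induction l₁ with
  | nil =>
    intro x h
    obtain rfl := h.head_eq
    exact h
  | cons c l₁' ih =>
    intro x h
    obtain ⟨v', -, hw⟩ := h.tail_walk (by simp)
    exact ih hw

theorem DWalk.cons₂ {x y x' b : V} {l : List V} (h : DWalk A x y (x' :: b :: l)) :
    A x b ∧ DWalk A b y (b :: l) := by
  obtain ⟨v', harc, hw⟩ := h.tail_walk (by simp)
  have hb := hw.head_eq
  subst hb
  exact ⟨harc, hw⟩

theorem arcOn_cons_elim {a b x : V} {l : List V} (h : ArcOn a b (x :: l)) :
    (x = a ∧ ∃ l₂, l = b :: l₂) ∨ ArcOn a b l := by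
  obtain ⟨l₁, l₂, heq⟩ := h
  cases l₁ with
  | nil =>
    simp only [List.nil_append, List.cons.injEq] at heq
    exact Or.inl ⟨heq.1, l₂, heq.2⟩
  | cons c l₁' =>
    simp only [List.cons_append, List.cons.injEq] at heq
    exact Or.inr ⟨l₁', l₂, heq.2⟩

/-- The key lemma: if every shortest walk from `p` to `q` contains the arc `(s, t)`
and `p ≠ s`, then in a tournament `t` beats `p`, and every in-neighbour of `t`
other than `s` beats `p`. -/
theorem tail_lemma (total : ∀ x y : V, x ≠ y → A x y ∨ A y x)
    (asymm : ∀ x y : V, A x y → ¬ A y x)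
    {p q s t : V} (hps : p ≠ s)
    (hex : ∃ l, IsShortest A p q l)
    (hall : ∀ l, IsShortest A p q l → ArcOn s t l) :
    A t p ∧ ∀ ξ, A ξ t → ξ ≠ s → A ξ p := by
  obtain ⟨W, hW⟩ := hex
  obtain ⟨l₁, l₂, hsplit⟩ := hall W hW
  subst hsplit
  have hwalk := hW.1
  have hmin := hW.2
  have hWt : DWalk A t q (t :: l₂) := by
    refine DWalk.suffix (l₁ ++ [s]) (x := p) ?_
    rw [List.append_assoc]
    exact hwalk
  have hl₁ : l₁ ≠ [] := by
    rintro rfl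
    exact hps hwalk.head_eq.symm
  have hpt : p ≠ t := by
    rintro rfl
    have := hmin _ hWt
    simp only [List.length_append, List.length_cons] at this
    omega
  have hnpt : ¬ A p t := by
    intro hp
    have := hmin _ (DWalk.cons hp hWt)
    simp only [List.length_append, List.length_cons] at this
    have hl0 : l₁.length = 0 := by omega
    exact hl₁ (List.length_eq_zero_iff.mp hl0)
  have htp : A t p := (total t p (Ne.symm hpt)).resolve_right hnpt
  refine ⟨htp, ?_⟩
  intro ξ hξt hξs
  have hξp : ξ ≠ p := by rintro rfl; exact hnpt hξt
  by_contra hcon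
  have hpξ : A p ξ := (total ξ p hξp).resolve_left hcon
  have hW3 : DWalk A p q (p :: ξ :: t :: l₂) := .cons hpξ (.cons hξt hWt)
  have hlen3 := hmin _ hW3
  have hl₁pos : 0 < l₁.length := List.length_pos_iff.mpr hl₁
  have hl₁1 : l₁.length = 1 := by
    simp only [List.length_append, List.length_cons] at hlen3
    omega
  obtain ⟨c, rfl⟩ : ∃ c, l₁ = [c] := by
    match l₁, hl₁1 with
    | [c], _ => exact ⟨c, rfl⟩
  have hc : p = c := hwalk.head_eq.symm
  subst hc
  have hW3short : IsShortest A p q (p :: ξ :: t :: l₂) := by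
    refine ⟨hW3, fun l' hl' => ?_⟩
    have := hmin _ hl'
    simp only [List.singleton_append, List.length_cons] at this ⊢
    omega
  have harc3 := hall _ hW3short
  rcases arcOn_cons_elim harc3 with ⟨hpa, -⟩ | h2
  · exact hps hpa
  rcases arcOn_cons_elim h2 with ⟨hxa, -⟩ | h3
  · exact hξs hxa
  -- the arc (s,t) occurs inside t :: l₂ : cut it out for a shorter walk
  obtain ⟨X, Y, hXY⟩ := h3
  have hWtY : DWalk A t q (t :: Y) := by
    refine DWalk.suffix (X ++ [s]) (x := t) ?_
    have heq : (X ++ [s]) ++ t :: Y = t :: l₂ := by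
      rw [List.append_assoc]
      simpa using hXY.symm
    rw [heq]
    exact hWt
  have hps' := hwalk.cons₂
  have hst := hps'.2.cons₂
  have hW6 : DWalk A p q (p :: s :: t :: Y) := .cons hps'.1 (.cons hst.1 hWtY)
  have hlen6 := hmin _ hW6
  have hlenXY := congrArg List.length hXY
  simp only [List.singleton_append, List.length_cons, List.length_append] at hlen6 hlenXY
  omega

end Surgery

/-- In a tournament, a monitoring arc-geodetic set misses at most one vertex. -/
theorem two_missing_false [Fintype V]
    {A : V → V → Prop}
    (total : ∀ x y : V, x ≠ y → A x y ∨ A y x)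
    (asymm : ∀ x y : V, A x y → ¬ A y x)
    {M : Set V} (hM : IsMAGSet A M) {u v : V} (huv : u ≠ v)
    (hu : u ∉ M) (hv : v ∉ M) : False := by
  classical
  have main : ∀ u v : V, u ∉ M → v ∉ M → A u v → False := by
    clear hu hv huv u v
    intro u v hu hv hA
    -- Step 1: the monitor of (u,v) gives the seed of the chain
    have step : ∀ a c : V, A a c → a ∉ M →
        ∃ p ∈ M, A c p ∧ ∀ ξ, A ξ c → ξ ≠ a → A ξ p := by
      intro a c hac haM
      obtain ⟨x, hx, y, hy, hxy, hmon⟩ := hM a c hac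
      rcases hmon with ⟨hex, hall⟩ | ⟨hex, hall⟩
      · have hps : x ≠ a := fun h => haM (h ▸ hx)
        obtain ⟨htp, hdom⟩ := tail_lemma total asymm hps hex hall
        exact ⟨x, hx, htp, hdom⟩
      · have hps : y ≠ a := fun h => haM (h ▸ hy)
        obtain ⟨htp, hdom⟩ := tail_lemma total asymm hps hex hall
        exact ⟨y, hy, htp, hdom⟩
    obtain ⟨p₀, hp₀M, hvp₀, hdom₀⟩ := step u v hA hu
    -- Step 2: well-founded chain
    have chain : ∀ k (c : V), c ∈ M → A v c → (∀ ξ, A ξ v → ξ ≠ u → A ξ c) →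
        (Finset.univ.filter (fun ξ => ¬ A ξ c)).card = k → False := by
      intro k
      induction k using Nat.strong_induction_on with
      | _ k ih =>
        intro c hcM hvc hinv hcard
        obtain ⟨p, hpM, hcp, hdom⟩ := step v c hvc hv
        by_cases hpv : A p v
        · have hpu : p ≠ u := fun h => hu (h ▸ hpM)
          have h1 : A p c := hinv p hpv hpu
          have h2 : A p p := hdom p h1 (fun h => hv (h ▸ hpM))
          exact asymm _ _ h2 h2
        · have hpv' : p ≠ v := fun h => hv (h ▸ hpM)
          have hvp : A v p := (total v p (Ne.symm hpv')).resolve_right hpv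
          have hinv' : ∀ ξ, A ξ v → ξ ≠ u → A ξ p := by
            intro ξ h1 h2
            have hξv : ξ ≠ v := fun h => asymm _ _ (h ▸ h1) (h ▸ h1)
            exact hdom ξ (hinv ξ h1 h2) hξv
          have hsub : (Finset.univ.filter (fun ξ => ¬ A ξ p)) ⊂
              (Finset.univ.filter (fun ξ => ¬ A ξ c)) := by
            constructor
            · intro ξ hξ
              simp only [Finset.mem_filter, Finset.mem_univ, true_and] at hξ ⊢
              intro hξc
              by_cases hξv : ξ = v
              · exact hξ (hξv ▸ hvp)
              · exact hξ (hdom ξ hξc hξv)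
            · intro hsup
              have hc1 : c ∈ Finset.univ.filter (fun ξ => ¬ A ξ c) := by
                simp only [Finset.mem_filter, Finset.mem_univ, true_and]
                exact fun h => asymm _ _ h h
              have := hsup hc1
              simp only [Finset.mem_filter, Finset.mem_univ, true_and] at this
              exact this hcp
          have hlt := Finset.card_lt_card hsub
          exact ih _ (hcard ▸ hlt) p hpM hvp hinv' rfl
    exact chain _ p₀ hp₀M hvp₀ hdom₀ rfl
  rcases total u v huv with h | h
  · exact main u v hu hv h
  · exact main v u hv hu h

/-! ### The explicit tournament -/

def Tar (n : ℕ) : Fin n → Fin n → Prop := fun i j =>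
  (i.val < j.val ∧ j.val ≤ n - 2) ∨
  (i.val = n - 1 ∧ j.val ≤ n - 3) ∨
  (i.val = n - 2 ∧ j.val = n - 1)

section Tn

variable {n : ℕ}

theorem tar_ne (hn : 3 ≤ n) {x y : Fin n} (h : Tar n x y) : x ≠ y := by
  rcases h with ⟨h1, h2⟩ | ⟨h1, h2⟩ | ⟨h1, h2⟩ <;> (intro he; subst he; omega)

theorem into_z (hn : 3 ≤ n) {x y : Fin n} (h : Tar n x y) (hy : y.val = n - 1) :
    x.val = n - 2 := by
  rcases h with ⟨h1, h2⟩ | ⟨h1, h2⟩ | ⟨h1, h2⟩ <;> omega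

theorem out_w2 (hn : 3 ≤ n) {x y : Fin n} (h : Tar n x y) (hx : x.val = n - 2) :
    y.val = n - 1 := by
  rcases h with ⟨h1, h2⟩ | ⟨h1, h2⟩ | ⟨h1, h2⟩ <;> omega

theorem fin_ne_of_val_ne {x y : Fin n} (h : x.val ≠ y.val) : x ≠ y :=
  fun he => h (congrArg Fin.val he)

theorem shortest_nil {A : Fin n → Fin n → Prop} (x : Fin n) :
    IsShortest A x x [x] :=
  ⟨.nil x, fun _ h => h.one_le_length⟩

theorem sw_arc (hn : 3 ≤ n) {x y : Fin n} (h : Tar n x y) :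
    IsShortest (Tar n) x y [x, y] :=
  ⟨DWalk.single h, fun _ hl' => hl'.two_le_length (tar_ne hn h)⟩

theorem shortest_eq_pair (hn : 3 ≤ n) {x y : Fin n} (h : Tar n x y) {l : List (Fin n)}
    (hl : IsShortest (Tar n) x y l) : l = [x, y] := by
  have h2 : l.length ≤ 2 := by simpa using hl.2 _ (DWalk.single h)
  have h2' : 2 ≤ l.length := hl.1.two_le_length (tar_ne hn h)
  exact (hl.1.eq_pair (by omega)).1

/-- Shortest walk from the vertex `n-2` to any `y ≤ n-3` is `[n-2, n-1, y]`. -/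
theorem sw_w2y (hn : 3 ≤ n) {w z y : Fin n} (hw : w.val = n - 2) (hz : z.val = n - 1)
    (hy : y.val ≤ n - 3) : IsShortest (Tar n) w y [w, z, y] := by
  constructor
  · exact DWalk.double (Or.inr (Or.inr ⟨hw, hz⟩)) (Or.inr (Or.inl ⟨hz, hy⟩))
  · intro l' hl'
    have h2 := hl'.two_le_length (fin_ne_of_val_ne (by omega))
    by_contra hcon
    have hl2 : l'.length = 2 := by simp at hcon; omega
    obtain ⟨-, harc⟩ := hl'.eq_pair hl2
    have := out_w2 hn harc hw
    omega

theorem shortest_w2y_eq (hn : 3 ≤ n) {w z y : Fin n} (hw : w.val = n - 2) (hz : z.val = n - 1)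
    (hy : y.val ≤ n - 3) {l : List (Fin n)}
    (hl : IsShortest (Tar n) w y l) : l = [w, z, y] := by
  have hlen : l.length = 3 := by
    have a := hl.2 _ (sw_w2y hn hw hz hy).1
    have b := (sw_w2y hn hw hz hy).2 _ hl.1
    simp at a b; omega
  obtain ⟨m, rfl, h1, h2⟩ := hl.1.eq_triple hlen
  have hm := out_w2 hn h1 hw
  rw [show m = z from Fin.val_injective (by omega)]

theorem sw_xz (hn : 3 ≤ n) {x w z : Fin n} (hx : x.val ≤ n - 3) (hw : w.val = n - 2)
    (hz : z.val = n - 1) : IsShortest (Tar n) x z [x, w, z] := by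
  constructor
  · exact DWalk.double (Or.inl ⟨by omega, by omega⟩) (Or.inr (Or.inr ⟨hw, hz⟩))
  · intro l' hl'
    have h2 := hl'.two_le_length (fin_ne_of_val_ne (by omega))
    by_contra hcon
    have hl2 : l'.length = 2 := by simp at hcon; omega
    obtain ⟨-, harc⟩ := hl'.eq_pair hl2
    have := into_z hn harc hz
    omega

theorem sw_far (hn : 3 ≤ n) {x y w z : Fin n} (hx : x.val ≤ n - 3) (hyx : y.val < x.val)
    (hw : w.val = n - 2) (hz : z.val = n - 1) :
    IsShortest (Tar n) x y [x, w, z, y] := by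
  constructor
  · exact DWalk.triple (Or.inl ⟨by omega, by omega⟩) (Or.inr (Or.inr ⟨hw, hz⟩))
      (Or.inr (Or.inl ⟨hz, by omega⟩))
  · intro l' hl'
    have h2 := hl'.two_le_length (fin_ne_of_val_ne (by omega))
    by_contra hcon
    have hl23 : l'.length = 2 ∨ l'.length = 3 := by simp at hcon; omega
    rcases hl23 with hl2 | hl3
    · obtain ⟨-, harc⟩ := hl'.eq_pair hl2
      rcases harc with ⟨a1, a2⟩ | ⟨a1, a2⟩ | ⟨a1, a2⟩ <;> omega
    · obtain ⟨m, -, h1, h2'⟩ := hl'.eq_triple hl3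
      rcases h2' with ⟨a1, a2⟩ | ⟨a1, a2⟩ | ⟨a1, a2⟩
      · rcases h1 with ⟨b1, b2⟩ | ⟨b1, b2⟩ | ⟨b1, b2⟩ <;> omega
      · have := into_z hn h1 a1; omega
      · omega

theorem sw_zw2 (hn : 3 ≤ n) {z v0 w : Fin n} (hz : z.val = n - 1) (h0 : v0.val = 0)
    (hw : w.val = n - 2) : IsShortest (Tar n) z w [z, v0, w] := by
  constructor
  · exact DWalk.double (Or.inr (Or.inl ⟨hz, by omega⟩)) (Or.inl ⟨by omega, by omega⟩)
  · intro l' hl'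
    have h2 := hl'.two_le_length (fin_ne_of_val_ne (by omega))
    by_contra hcon
    have hl2 : l'.length = 2 := by simp at hcon; omega
    obtain ⟨-, harc⟩ := hl'.eq_pair hl2
    rcases harc with ⟨a1, a2⟩ | ⟨a1, a2⟩ | ⟨a1, a2⟩ <;> omega

/-! ### The explicit set is a MAG set -/

theorem part1 (hn : 3 ≤ n) :
    IsMAGSet (Tar n) {i : Fin n | i.val ≤ n - 2} := by
  obtain ⟨w2, hw2⟩ : ∃ w : Fin n, w.val = n - 2 := ⟨⟨n - 2, by omega⟩, rfl⟩
  obtain ⟨v0, h0⟩ : ∃ v : Fin n, v.val = 0 := ⟨⟨0, by omega⟩, rfl⟩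
  intro a b harc
  rcases harc with ⟨h1, h2⟩ | ⟨h1, h2⟩ | ⟨h1, h2⟩
  · -- a < b ≤ n-2 : self-monitored
    have harc' : Tar n a b := Or.inl ⟨h1, h2⟩
    refine ⟨a, by simp only [Set.mem_setOf_eq]; omega,
      b, by simp only [Set.mem_setOf_eq]; omega, tar_ne hn harc',
      Or.inl ⟨⟨_, sw_arc hn harc'⟩, ?_⟩⟩
    intro l hl
    rw [shortest_eq_pair hn harc' hl]
    exact arcOn_cons₀ _
  · -- a = n-1, b ≤ n-3 : monitored by (n-2, b); a itself is the middle vertex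
    refine ⟨w2, by simp only [Set.mem_setOf_eq]; omega,
      b, by simp only [Set.mem_setOf_eq]; omega,
      fin_ne_of_val_ne (by omega), Or.inl ⟨⟨_, sw_w2y hn hw2 h1 h2⟩, ?_⟩⟩
    intro l hl
    rw [shortest_w2y_eq hn hw2 h1 h2 hl]
    exact arcOn_cons₁ _
  · -- a = n-2, b = n-1 : monitored by (a, 0); walk [a, b, 0]
    refine ⟨a, by simp only [Set.mem_setOf_eq]; omega,
      v0, by simp only [Set.mem_setOf_eq]; omega,
      fin_ne_of_val_ne (by omega), Or.inl ⟨⟨_, sw_w2y hn h1 h2 (by omega)⟩, ?_⟩⟩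
    intro l hl
    rw [shortest_w2y_eq hn h1 h2 (by omega) hl]
    exact arcOn_cons₀ _

/-! ### Characterisation of monitoring pairs -/

theorem char1 (hn : 3 ≤ n) {i j x y : Fin n} (hij : i.val < j.val) (hj : j.val ≤ n - 3)
    (H : ∀ l, IsShortest (Tar n) x y l → ArcOn i j l) : x = i ∧ y = j := by
  obtain ⟨w2, hw2⟩ : ∃ w : Fin n, w.val = n - 2 := ⟨⟨n - 2, by omega⟩, rfl⟩
  obtain ⟨zz, hzz⟩ : ∃ z : Fin n, z.val = n - 1 := ⟨⟨n - 1, by omega⟩, rfl⟩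
  obtain ⟨v0, h0⟩ : ∃ v : Fin n, v.val = 0 := ⟨⟨0, by omega⟩, rfl⟩
  rcases Nat.lt_trichotomy x.val y.val with hxy | hxy | hxy
  · -- x < y
    by_cases hy2 : y.val ≤ n - 2
    · have harc : Tar n x y := Or.inl ⟨hxy, hy2⟩
      obtain ⟨hi, hj'⟩ := (H _ (sw_arc hn harc)).of_pair
      exact ⟨hi.symm, hj'.symm⟩
    · have hy1 : y.val = n - 1 := by have := y.isLt; omega
      by_cases hx2 : x.val = n - 2
      · have harc : Tar n x y := Or.inr (Or.inr ⟨hx2, hy1⟩)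
        obtain ⟨hi, hj'⟩ := (H _ (sw_arc hn harc)).of_pair
        exfalso
        have h1 := congrArg Fin.val hi; have h2 := congrArg Fin.val hj'
        omega
      · have hx3 : x.val ≤ n - 3 := by omega
        rcases (H _ (sw_xz hn hx3 hw2 hy1)).of_triple with ⟨hi, hj'⟩ | ⟨hi, hj'⟩ <;> exfalso
        · have h1 := congrArg Fin.val hj'; omega
        · have h1 := congrArg Fin.val hi; omega
  · -- x = y
    have hxy' : x = y := Fin.val_injective hxy
    subst hxy'
    exact absurd (H _ (shortest_nil x)) (fun h => h.of_single)
  · -- y < x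
    by_cases hx3 : x.val ≤ n - 3
    · rcases (H _ (sw_far hn hx3 hxy hw2 hzz)).of_quad with ⟨hi, hj'⟩ | ⟨hi, hj'⟩ | ⟨hi, hj'⟩ <;>
        exfalso
      · have h1 := congrArg Fin.val hj'; omega
      · have h1 := congrArg Fin.val hj'; omega
      · have h1 := congrArg Fin.val hi; omega
    · by_cases hx2 : x.val = n - 2
      · have hy3 : y.val ≤ n - 3 := by omega
        rcases (H _ (sw_w2y hn hx2 hzz hy3)).of_triple with ⟨hi, hj'⟩ | ⟨hi, hj'⟩ <;> exfalso
        · have h1 := congrArg Fin.val hj'; omega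
        · have h1 := congrArg Fin.val hi; omega
      · have hx1 : x.val = n - 1 := by have := x.isLt; omega
        by_cases hy2 : y.val = n - 2
        · rcases (H _ (sw_zw2 hn hx1 h0 hy2)).of_triple with ⟨hi, hj'⟩ | ⟨hi, hj'⟩ <;> exfalso
          · have h1 := congrArg Fin.val hi; omega
          · have h1 := congrArg Fin.val hj'; omega
        · have hy3 : y.val ≤ n - 3 := by omega
          have harc : Tar n x y := Or.inr (Or.inl ⟨hx1, hy3⟩)
          obtain ⟨hi, hj'⟩ := (H _ (sw_arc hn harc)).of_pair
          exfalso
          have h1 := congrArg Fin.val hi; omega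

theorem char2 (hn4 : 4 ≤ n) {x y zz t : Fin n} (hzz : zz.val = n - 1) (ht : t.val = n - 3)
    (H : ∀ l, IsShortest (Tar n) x y l → ArcOn zz t l) :
    (x = zz ∨ x.val = n - 2) ∧ y = t := by
  have hn : 3 ≤ n := by omega
  obtain ⟨w2, hw2⟩ : ∃ w : Fin n, w.val = n - 2 := ⟨⟨n - 2, by omega⟩, rfl⟩
  obtain ⟨v0, h0⟩ : ∃ v : Fin n, v.val = 0 := ⟨⟨0, by omega⟩, rfl⟩
  rcases Nat.lt_trichotomy x.val y.val with hxy | hxy | hxy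
  · -- x < y
    by_cases hy2 : y.val ≤ n - 2
    · have harc : Tar n x y := Or.inl ⟨hxy, hy2⟩
      obtain ⟨hi, hj'⟩ := (H _ (sw_arc hn harc)).of_pair
      exfalso
      have h1 := congrArg Fin.val hi; have h2 := congrArg Fin.val hj'
      omega
    · have hy1 : y.val = n - 1 := by have := y.isLt; omega
      by_cases hx2 : x.val = n - 2
      · have harc : Tar n x y := Or.inr (Or.inr ⟨hx2, hy1⟩)
        obtain ⟨hi, hj'⟩ := (H _ (sw_arc hn harc)).of_pair
        exfalso
        have h1 := congrArg Fin.val hi; omega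
      · have hx3 : x.val ≤ n - 3 := by omega
        rcases (H _ (sw_xz hn hx3 hw2 hy1)).of_triple with ⟨hi, hj'⟩ | ⟨hi, hj'⟩ <;> exfalso
        · have h1 := congrArg Fin.val hi; omega
        · have h1 := congrArg Fin.val hi; omega
  · -- x = y
    have hxy' : x = y := Fin.val_injective hxy
    subst hxy'
    exact absurd (H _ (shortest_nil x)) (fun h => h.of_single)
  · -- y < x
    by_cases hx3 : x.val ≤ n - 3
    · rcases (H _ (sw_far hn hx3 hxy hw2 hzz)).of_quad with ⟨hi, hj'⟩ | ⟨hi, hj'⟩ | ⟨hi, hj'⟩ <;>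
        exfalso
      · have h1 := congrArg Fin.val hi; omega
      · have h1 := congrArg Fin.val hi; omega
      · have h1 := congrArg Fin.val hj'; omega
    · by_cases hx2 : x.val = n - 2
      · have hy3 : y.val ≤ n - 3 := by omega
        rcases (H _ (sw_w2y hn hx2 hzz hy3)).of_triple with ⟨hi, hj'⟩ | ⟨hi, hj'⟩
        · exfalso; have h1 := congrArg Fin.val hi; omega
        · exact ⟨Or.inr hx2, hj'.symm⟩
      · have hx1 : x.val = n - 1 := by have := x.isLt; omega
        by_cases hy2 : y.val = n - 2
        · rcases (H _ (sw_zw2 hn hx1 h0 hy2)).of_triple with ⟨hi, hj'⟩ | ⟨hi, hj'⟩ <;> exfalso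
          · have h1 := congrArg Fin.val hj'; omega
          · have h1 := congrArg Fin.val hi; omega
        · have hy3 : y.val ≤ n - 3 := by omega
          have harc : Tar n x y := Or.inr (Or.inl ⟨hx1, hy3⟩)
          obtain ⟨hi, hj'⟩ := (H _ (sw_arc hn harc)).of_pair
          exact ⟨Or.inl hi.symm, hj'.symm⟩


/-! ### Counting -/

theorem card_filter_val_le (k : ℕ) (hk : k < n) :
    (Finset.univ.filter fun i : Fin n => i.val ≤ k).card = k + 1 := by
  rw [← Finset.card_range (k + 1)]
  apply Finset.card_bij (fun (i : Fin n) _ => i.val)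
  · intro a ha
    simp only [Finset.mem_filter] at ha
    simp only [Finset.mem_range]
    omega
  · intro a _ b _ hab
    exact Fin.val_injective hab
  · intro b hb
    simp only [Finset.mem_range] at hb
    exact ⟨⟨b, by omega⟩, by simp; omega, rfl⟩

theorem card_lower (hn : 3 ≤ n) (M : Finset (Fin n))
    (hM : IsMAGSet (Tar n) (M : Set (Fin n))) : n - 1 ≤ M.card := by
  by_cases hn4 : 4 ≤ n
  · obtain ⟨t, ht⟩ : ∃ t : Fin n, t.val = n - 3 := ⟨⟨n - 3, by omega⟩, rfl⟩
    obtain ⟨zz, hzz⟩ : ∃ z : Fin n, z.val = n - 1 := ⟨⟨n - 1, by omega⟩, rfl⟩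
    obtain ⟨v0, h0⟩ : ∃ v : Fin n, v.val = 0 := ⟨⟨0, by omega⟩, rfl⟩
    have step1 : ∀ i : Fin n, i.val ≤ n - 3 → i ∈ M := by
      intro i hi
      rcases Nat.lt_or_ge i.val (n - 3) with hlt | hge
      · obtain ⟨x, hx, y, hy, hne, hmon⟩ := hM i t (Or.inl ⟨by omega, by omega⟩)
        rcases hmon with ⟨-, hall⟩ | ⟨-, hall⟩
        · obtain ⟨hx', -⟩ := char1 hn (by omega) (by omega) hall
          exact hx' ▸ hx
        · obtain ⟨hx', -⟩ := char1 hn (by omega) (by omega) hall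
          exact hx' ▸ hy
      · obtain ⟨x, hx, y, hy, hne, hmon⟩ := hM v0 i (Or.inl ⟨by omega, by omega⟩)
        rcases hmon with ⟨-, hall⟩ | ⟨-, hall⟩
        · obtain ⟨-, hy'⟩ := char1 hn (by omega) (by omega) hall
          exact hy' ▸ hy
        · obtain ⟨-, hy'⟩ := char1 hn (by omega) (by omega) hall
          exact hy' ▸ hx
    have step2 : ∃ w : Fin n, w ∈ M ∧ n - 2 ≤ w.val := by
      obtain ⟨x, hx, y, hy, hne, hmon⟩ := hM zz t (Or.inr (Or.inl ⟨hzz, by omega⟩))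
      rcases hmon with ⟨-, hall⟩ | ⟨-, hall⟩
      · obtain ⟨hx', -⟩ := char2 hn4 hzz ht hall
        rcases hx' with he | hval
        · exact ⟨x, hx, by rw [he]; omega⟩
        · exact ⟨x, hx, by omega⟩
      · obtain ⟨hy', -⟩ := char2 hn4 hzz ht hall
        rcases hy' with he | hval
        · exact ⟨y, hy, by rw [he]; omega⟩
        · exact ⟨y, hy, by omega⟩
    obtain ⟨w, hwM, hwval⟩ := step2
    have hsub : insert w (Finset.univ.filter fun i : Fin n => i.val ≤ n - 3) ⊆ M := by
      intro a ha
      rcases Finset.mem_insert.mp ha with rfl | ha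
      · exact hwM
      · exact step1 a (Finset.mem_filter.mp ha).2
    have hnotmem : w ∉ (Finset.univ.filter fun i : Fin n => i.val ≤ n - 3) := by
      simp only [Finset.mem_filter, Finset.mem_univ, true_and]
      omega
    have hcard := Finset.card_insert_of_notMem hnotmem
    have hfil := card_filter_val_le (n := n) (n - 3) (by omega)
    have hle := Finset.card_le_card hsub
    omega
  · obtain ⟨o, ho⟩ : ∃ o : Fin n, o.val = 0 := ⟨⟨0, by omega⟩, rfl⟩
    obtain ⟨e, he⟩ : ∃ e : Fin n, e.val = 1 := ⟨⟨1, by omega⟩, rfl⟩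
    obtain ⟨x, hx, y, hy, hne, -⟩ := hM o e (Or.inl ⟨by omega, by omega⟩)
    have : 1 < M.card := Finset.one_lt_card.mpr ⟨x, hx, y, hy, hne⟩
    omega

theorem part2 (hn : 3 ≤ n) : mag (Tar n) = n - 1 := by
  have hset : ((Finset.univ.filter fun i : Fin n => i.val ≤ n - 2 : Finset (Fin n)) : Set (Fin n))
      = {i : Fin n | i.val ≤ n - 2} := by
    ext i; simp
  have hmem : n - 1 ∈ {m | ∃ M : Finset (Fin n),
      IsMAGSet (Tar n) (M : Set (Fin n)) ∧ M.card = m} := by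
    refine ⟨_, by rw [hset]; exact part1 hn, ?_⟩
    rw [card_filter_val_le (n - 2) (by omega)]
    omega
  refine le_antisymm (Nat.sInf_le hmem) (le_csInf ⟨_, hmem⟩ ?_)
  rintro k ⟨M, hM, rfl⟩
  exact card_lower hn M hM

theorem tar_orientation (hn : 3 ≤ n) : IsOrientation (⊤ : SimpleGraph (Fin n)) (Tar n) := by
  constructor
  · intro u v
    simp only [SimpleGraph.top_adj]
    constructor
    · intro huv
      have hval : u.val ≠ v.val := fun h => huv (Fin.val_injective h)
      have hu := u.isLt; have hv := v.isLt
      rcases Nat.lt_trichotomy u.val v.val with h | h | h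
      · by_cases h2 : v.val ≤ n - 2
        · exact Or.inl (Or.inl ⟨h, h2⟩)
        · have hv1 : v.val = n - 1 := by omega
          by_cases h3 : u.val = n - 2
          · exact Or.inl (Or.inr (Or.inr ⟨h3, hv1⟩))
          · exact Or.inr (Or.inr (Or.inl ⟨hv1, by omega⟩))
      · exact absurd h hval
      · by_cases h2 : u.val ≤ n - 2
        · exact Or.inr (Or.inl ⟨h, h2⟩)
        · have hu1 : u.val = n - 1 := by omega
          by_cases h3 : v.val = n - 2
          · exact Or.inr (Or.inr (Or.inr ⟨h3, hu1⟩))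
          · exact Or.inl (Or.inr (Or.inl ⟨hu1, by omega⟩))
    · intro h
      rcases h with h | h
      · exact tar_ne hn h
      · exact (tar_ne hn h).symm
  · intro u v huv hvu
    rcases huv with ⟨a1, a2⟩ | ⟨a1, a2⟩ | ⟨a1, a2⟩ <;>
      rcases hvu with ⟨b1, b2⟩ | ⟨b1, b2⟩ | ⟨b1, b2⟩ <;> omega

theorem tournament_lower (hn : 3 ≤ n) (A : Fin n → Fin n → Prop)
    (hA : IsOrientation (⊤ : SimpleGraph (Fin n)) A) : n - 1 ≤ mag A := by
  classical
  have total : ∀ x y : Fin n, x ≠ y → A x y ∨ A y x := by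
    intro x y hxy
    exact (hA.adj_iff x y).mp (by simp [hxy])
  have asymm := hA.asymm
  have huniv : IsMAGSet A ((Finset.univ : Finset (Fin n)) : Set (Fin n)) := by
    intro a b hab
    have hne : a ≠ b := by rintro rfl; exact asymm _ _ hab hab
    refine ⟨a, by simp, b, by simp, hne, Or.inl ⟨⟨[a, b],
      DWalk.single hab, fun l' hl' => hl'.two_le_length hne⟩, ?_⟩⟩
    intro l hl
    have h2 : l.length ≤ 2 := by simpa using hl.2 _ (DWalk.single hab)
    have h2' := hl.1.two_le_length hne
    rw [(hl.1.eq_pair (by omega)).1]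
    exact arcOn_cons₀ _
  refine le_csInf ⟨Fintype.card (Fin n), Finset.univ, huniv, Finset.card_univ⟩ ?_
  rintro k ⟨M, hM, rfl⟩
  by_contra hcon
  push_neg at hcon
  have hcompl : 1 < Mᶜ.card := by
    have h1 := Finset.card_compl M
    have h2 : Fintype.card (Fin n) = n := Fintype.card_fin n
    omega
  obtain ⟨u, hu, v, hv, huv⟩ := Finset.one_lt_card.mp hcompl
  have hu' : u ∉ (M : Set (Fin n)) := by
    simp only [Finset.mem_compl] at hu
    simpa using hu
  have hv' : v ∉ (M : Set (Fin n)) := by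
    simp only [Finset.mem_compl] at hv
    simpa using hv
  exact (two_missing_false total asymm hM huv hu' hv').elim

theorem part3 (hn : 3 ≤ n) : magMinus (⊤ : SimpleGraph (Fin n)) = n - 1 := by
  have hmem : n - 1 ∈ {m | ∃ A : Fin n → Fin n → Prop,
      IsOrientation (⊤ : SimpleGraph (Fin n)) A ∧ mag A = m} :=
    ⟨Tar n, tar_orientation hn, part2 hn⟩
  refine le_antisymm (Nat.sInf_le hmem) (le_csInf ⟨_, hmem⟩ ?_)
  rintro k ⟨A, hA, rfl⟩
  exact tournament_lower hn A hA

end Tn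

/-- for `n ≥ 3` there is a tournament on `n` vertices with
`mag = n - 1`; hence `mag⁻(K_n) = n - 1`.  Explicitly (0-based), the
tournament with arcs `i → j` for `i < j ≤ n - 2`, arcs `(n-1) → i` for
`i ≤ n - 3`, and the arc `(n-2) → (n-1)`, has the first `n - 1` vertices as a
MAG-set. -/
theorem tournament_mag_eq_card_sub_one (n : ℕ) (hn : 3 ≤ n) :
    IsMAGSet (fun i j : Fin n =>
        (i.val < j.val ∧ j.val ≤ n - 2) ∨
        (i.val = n - 1 ∧ j.val ≤ n - 3) ∨
        (i.val = n - 2 ∧ j.val = n - 1))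
      {i : Fin n | i.val ≤ n - 2} ∧
    mag (fun i j : Fin n =>
        (i.val < j.val ∧ j.val ≤ n - 2) ∨
        (i.val = n - 1 ∧ j.val ≤ n - 3) ∨
        (i.val = n - 2 ∧ j.val = n - 1)) = n - 1 ∧
    magMinus (⊤ : SimpleGraph (Fin n)) = n - 1 :=
  ⟨part1 hn, part2 hn, part3 hn⟩

end MAG
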